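/- arXiv:1510.02423 — 2 statements merged into one kernel-verified Lean document; each statement's English description precedes it below -/
import Mathlib

section
/- For every α ∈ ℂ with α ≠ 0, the representation ρ_α of the discrete Heisenberg group G on V is irreducible: every ℂ-subspace of V stable under ρ_α(g) for all g ∈ G is either 0 or all of V. -/
/-- The operator `ρ_α(a,b,c)` on the space `V = ℤ →₀ ℂ` of finitely supported functions,
defined on the standard basis by `ρ_α(a,b,c)(Δ_m) = q^{−c−a(m+1)}·α^a·Δ_{m+b}`. -/
noncomputable def heisRep (q : ℤ) (α : ℂ) (g : ℤ × ℤ × ℤ) : (ℤ →₀ ℂ) →ₗ[ℂ] (ℤ →₀ ℂ) :=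
  Finsupp.lift (ℤ →₀ ℂ) ℂ ℤ fun m =>
    ((q : ℂ) ^ (-g.2.2 - g.1 * (m + 1)) * α ^ g.1) • Finsupp.single (m + g.2.1) (1 : ℂ)


lemma heisRep_single (q : ℤ) (α : ℂ) (g : ℤ × ℤ × ℤ) (m : ℤ) (x : ℂ) :
    heisRep q α g (Finsupp.single m x) =
      (x * ((q : ℂ) ^ (-g.2.2 - g.1 * (m + 1)) * α ^ g.1)) •
        Finsupp.single (m + g.2.1) (1 : ℂ) := by
  rw [heisRep, Finsupp.lift_apply, Finsupp.sum_single_index (by rw [zero_smul]), smul_smul]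

lemma qpow_inj (q : ℤ) (hq : 2 ≤ q) {a b : ℤ} (h : (q : ℂ) ^ a = (q : ℂ) ^ b) : a = b := by
  have h1 : ((q : ℝ) ^ a : ℝ) = (q : ℝ) ^ b := by
    have := h
    rw [show ((q : ℂ)) = (((q : ℝ) : ℂ)) by push_cast; ring, ← Complex.ofReal_zpow,
      ← Complex.ofReal_zpow] at this
    exact_mod_cast this
  have h0 : (0 : ℝ) < (q : ℝ) := by exact_mod_cast lt_of_lt_of_le (by norm_num) hq
  have hne : ((q : ℝ)) ≠ 1 :=
    ne_of_gt (by exact_mod_cast lt_of_lt_of_le (by norm_num) hq : (1 : ℝ) < (q : ℝ))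
  exact zpow_right_injective₀ h0 hne h1

lemma heisRep_diag_apply (q : ℤ) (α : ℂ) (v : ℤ →₀ ℂ) (n : ℤ) :
    (heisRep q α (1, 0, 0) v) n = (q : ℂ) ^ (-(n + 1)) * α * v n := by
  induction v using Finsupp.induction_linear with
  | zero => simp
  | add f g hf hg => rw [map_add, Finsupp.add_apply, hf, hg, Finsupp.add_apply]; ring
  | single m c =>
    rw [heisRep_single]
    rw [Finsupp.smul_single, Finsupp.single_apply, Finsupp.single_apply]
    by_cases h : m = n
    · subst h; simp; ring
    · simp [h]

/-- For every `α ≠ 0`, the representation `ρ_α` of the discrete Heisenberg group on `V` is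
irreducible: every ℂ-subspace of `V` stable under all `ρ_α(g)` is `0` or `V`. -/
theorem statement10 (q : ℤ) (hq : 2 ≤ q) (α : ℂ) (hα : α ≠ 0) :
    ∀ W : Submodule ℂ (ℤ →₀ ℂ),
      (∀ g : ℤ × ℤ × ℤ, ∀ v ∈ W, heisRep q α g v ∈ W) → W = ⊥ ∨ W = ⊤ := by
  intro W hW
  by_cases hbot : W = ⊥
  · exact Or.inl hbot
  right
  obtain ⟨v, hvW, hv0⟩ : ∃ v ∈ W, v ≠ 0 := by
    by_contra h
    push_neg at h
    exact hbot (by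
      ext x
      simp only [Submodule.mem_bot]
      exact ⟨fun hx => h x hx, fun hx => hx ▸ W.zero_mem⟩)
  have key : ∀ N : ℕ, ∀ v : ℤ →₀ ℂ, v.support.card ≤ N → v ∈ W → v ≠ 0 →
      ∃ m : ℤ, Finsupp.single m (1 : ℂ) ∈ W := by
    intro N
    induction N with
    | zero =>
      intro v hc hvW hv0
      exact absurd (Finsupp.support_eq_empty.mp (Finset.card_eq_zero.mp (Nat.le_zero.mp hc))) hv0
    | succ N ih =>
      intro v hc hvW hv0
      by_cases h1 : v.support.card ≤ 1
      · obtain ⟨m, hm⟩ := Finset.card_eq_one.mp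
          (le_antisymm h1 (Finset.card_pos.mpr (Finsupp.support_nonempty_iff.mpr hv0)))
        refine ⟨m, ?_⟩
        have hvm : v m ≠ 0 := Finsupp.mem_support_iff.mp (hm ▸ Finset.mem_singleton_self m)
        have heq : Finsupp.single m (1 : ℂ) = (v m)⁻¹ • v := by
          ext n
          rw [Finsupp.smul_apply, Finsupp.single_apply, smul_eq_mul]
          by_cases hn : m = n
          · subst hn; rw [if_pos rfl, inv_mul_cancel₀ hvm]
          · rw [if_neg hn]
            have : n ∉ v.support := by rw [hm]; simp [Ne.symm hn]
            rw [Finsupp.notMem_support_iff.mp this, mul_zero]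
        rw [heq]
        exact W.smul_mem _ hvW
      · obtain ⟨m₀, hm₀, m₁, hm₁, hmne⟩ := Finset.one_lt_card.mp (lt_of_not_ge h1)
        set w : ℤ →₀ ℂ := heisRep q α (1, 0, 0) v - ((q : ℂ) ^ (-(m₀ + 1)) * α) • v with hwdef
        have hwW : w ∈ W := W.sub_mem (hW _ v hvW) (W.smul_mem _ hvW)
        have hw : ∀ n, w n = ((q : ℂ) ^ (-(n + 1)) - (q : ℂ) ^ (-(m₀ + 1))) * α * v n := by
          intro n
          rw [hwdef, Finsupp.sub_apply, Finsupp.smul_apply, heisRep_diag_apply, smul_eq_mul]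
          ring
        have hsub : w.support ⊆ v.support := by
          intro n hn
          rw [Finsupp.mem_support_iff] at hn ⊢
          intro hvn
          exact hn (by rw [hw n, hvn, mul_zero])
        have hwm₀ : m₀ ∉ w.support := by
          rw [Finsupp.mem_support_iff, not_not, hw m₀, sub_self, zero_mul, zero_mul]
        have hwm₁ : w m₁ ≠ 0 := by
          rw [hw m₁]
          refine mul_ne_zero (mul_ne_zero (sub_ne_zero.mpr fun h => ?_) hα)
            (Finsupp.mem_support_iff.mp hm₁)
          exact hmne (by have := qpow_inj q hq h; omega)
        have hw0 : w ≠ 0 := fun h => hwm₁ (by rw [h]; rfl)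
        have hcard : w.support.card ≤ N := by
          have hlt : w.support.card < v.support.card :=
            Finset.card_lt_card ((Finset.ssubset_iff_of_subset hsub).mpr ⟨m₀, hm₀, hwm₀⟩)
          omega
        exact ih w hcard hwW hw0
  obtain ⟨m, hmW⟩ := key v.support.card v le_rfl hvW hv0
  have hsingles : ∀ n : ℤ, Finsupp.single n (1 : ℂ) ∈ W := by
    intro n
    have := hW (0, n - m, 0) _ hmW
    rw [heisRep_single] at this
    simpa using this
  rw [eq_top_iff]
  intro u _
  rw [← Finsupp.sum_single u]
  refine Submodule.sum_mem W fun n _ => ?_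
  rw [show Finsupp.single n (u n) = (u n) • Finsupp.single n (1 : ℂ) by
    rw [Finsupp.smul_single, smul_eq_mul, mul_one]]
  exact W.smul_mem _ (hsingles n)
end

section
/- For every α ∈ ℂ with α ≠ 0, the representation ρ̃_α of the extended group G̃ on V is irreducible: every ℂ-subspace of V stable under ρ̃_α(x) for all x ∈ G̃ is either 0 or all of V. -/
/-- The operator `ρ̃_α(a,b,c,d)` on the space `V = ℤ →₀ ℂ` of finitely supported
functions, defined on the standard basis by
`ρ̃_α(a,b,c,d)(Δ_l) = q^{−c−a(l+1)−d·l(l+1)/2}·α^{a+d·l}·Δ_{l+b}`. -/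
noncomputable def extRep (q : ℤ) (α : ℂ) (x : ℤ × ℤ × ℤ × ℤ) :
    (ℤ →₀ ℂ) →ₗ[ℂ] (ℤ →₀ ℂ) :=
  Finsupp.lift (ℤ →₀ ℂ) ℂ ℤ fun l =>
    ((q : ℂ) ^ (-x.2.2.1 - x.1 * (l + 1) - x.2.2.2 * (l * (l + 1) / 2)) *
        α ^ (x.1 + x.2.2.2 * l)) • Finsupp.single (l + x.2.1) (1 : ℂ)

lemma extRep_single (q : ℤ) (α : ℂ) (x : ℤ × ℤ × ℤ × ℤ) (l : ℤ) :
    extRep q α x (Finsupp.single l 1) =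
    ((q : ℂ) ^ (-x.2.2.1 - x.1 * (l + 1) - x.2.2.2 * (l * (l + 1) / 2)) *
        α ^ (x.1 + x.2.2.2 * l)) • Finsupp.single (l + x.2.1) (1 : ℂ) := by
  rw [extRep, Finsupp.lift_apply, Finsupp.sum_single_index, one_smul]
  rw [zero_smul]

lemma extRep_diag (q : ℤ) (α : ℂ) (v : ℤ →₀ ℂ) (m : ℤ) :
    extRep q α (1,0,0,0) v m = ((q:ℂ)^(-(m+1)) * α) * v m := by
  rw [extRep, Finsupp.lift_apply, Finsupp.sum_apply]
  rw [Finsupp.sum_eq_single m]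
  · simp [Finsupp.single_apply, mul_comm]
  · intro b _ hb
    simp [Finsupp.single_apply, hb]
  · simp

lemma mu_inj (q : ℤ) (hq : 2 ≤ q) {m n : ℤ} (h : (q:ℂ)^(-(m+1)) = (q:ℂ)^(-(n+1))) :
    m = n := by
  have hq1 : (1:ℝ) < (q:ℝ) := by exact_mod_cast lt_of_lt_of_le one_lt_two hq
  have := congrArg Norm.norm h
  rw [norm_zpow, norm_zpow, Complex.norm_intCast, abs_of_pos (by linarith : (0:ℝ) < q)] at this
  have := zpow_right_injective₀ (by linarith) (ne_of_gt hq1) this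
  omega

/-- For every `α ≠ 0`, the representation `ρ̃_α` of the extended group `G̃` on `V` is
irreducible: every ℂ-subspace of `V` stable under all `ρ̃_α(x)` is `0` or `V`. -/
theorem statement19 (q : ℤ) (hq : 2 ≤ q) (α : ℂ) (hα : α ≠ 0) :
    ∀ W : Submodule ℂ (ℤ →₀ ℂ),
      (∀ x : ℤ × ℤ × ℤ × ℤ, ∀ v ∈ W, extRep q α x v ∈ W) → W = ⊥ ∨ W = ⊤ := by
  intro W hW
  by_cases hbot : W = ⊥
  · exact Or.inl hbot
  right
  -- get a nonzero element of W
  obtain ⟨v0, hv0W, hv0⟩ : ∃ v ∈ W, v ≠ 0 := by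
    by_contra h
    push_neg at h
    exact hbot (Submodule.eq_bot_iff W |>.mpr h)
  -- Step 1: some Δ_l is in W
  have key : ∀ n : ℕ, ∀ v : ℤ →₀ ℂ, v.support.card = n → v ∈ W → v ≠ 0 →
      ∃ l : ℤ, Finsupp.single l (1:ℂ) ∈ W := by
    intro n
    induction n using Nat.strong_induction_on with
    | _ n ih =>
      intro v hcard hvW hv
      rcases Nat.lt_or_ge n 2 with hn | hn
      · -- card ≤ 1; nonzero forces card = 1
        have hne : v.support.Nonempty := Finsupp.support_nonempty_iff.mpr hv
        have h1 : v.support.card = 1 := by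
          have := Finset.card_pos.mpr hne
          omega
        obtain ⟨a, hb, hvab⟩ := Finsupp.card_support_eq_one.mp h1
        refine ⟨a, ?_⟩
        have : Finsupp.single a (1:ℂ) = (v a)⁻¹ • v := by
          nth_rewrite 2 [hvab]
          rw [Finsupp.smul_single, smul_eq_mul, inv_mul_cancel₀ hb]
        rw [this]
        exact W.smul_mem _ hvW
      · -- card ≥ 2 : kill one support point
        have h2 : 2 ≤ v.support.card := hcard ▸ hn
        obtain ⟨l₀, hl₀, l₁, hl₁, hne⟩ := Finset.one_lt_card.mp h2
        set μ : ℤ → ℂ := fun m => (q:ℂ)^(-(m+1)) * α with hμ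
        set w : ℤ →₀ ℂ := extRep q α (1,0,0,0) v - μ l₁ • v with hw
        have hwW : w ∈ W := W.sub_mem (hW _ v hvW) (W.smul_mem _ hvW)
        have hwm : ∀ m, w m = (μ m - μ l₁) * v m := by
          intro m
          simp only [hw, Finsupp.sub_apply, Finsupp.smul_apply, extRep_diag, smul_eq_mul, hμ]
          ring
        have hμne : μ l₀ ≠ μ l₁ := by
          intro h
          apply hne
          have h' : (q:ℂ)^(-(l₀+1)) * α = (q:ℂ)^(-(l₁+1)) * α := h
          exact mu_inj q hq (mul_right_cancel₀ hα h')
        have hwne : w ≠ 0 := by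
          intro h
          have : w l₀ = 0 := by rw [h]; rfl
          rw [hwm] at this
          rcases mul_eq_zero.mp this with h' | h'
          · exact hμne (sub_eq_zero.mp h')
          · exact (Finsupp.mem_support_iff.mp hl₀) h'
        have hsub : w.support ⊆ v.support.erase l₁ := by
          intro m hm
          rw [Finsupp.mem_support_iff, hwm] at hm
          rw [Finset.mem_erase, Finsupp.mem_support_iff]
          constructor
          · intro h
            apply hm
            rw [h, sub_self, zero_mul]
          · intro h
            apply hm
            rw [h, mul_zero]
        have hlt : w.support.card < n := by
          calc w.support.card ≤ (v.support.erase l₁).card := Finset.card_le_card hsub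
            _ < v.support.card := Finset.card_erase_lt_of_mem hl₁
            _ = n := hcard
        exact ih _ hlt w rfl hwW hwne
  obtain ⟨l₀, hl₀⟩ := key _ v0 rfl hv0W hv0
  -- Step 2: all Δ_l in W via translation
  have hall : ∀ l : ℤ, Finsupp.single l (1:ℂ) ∈ W := by
    intro l
    have := hW (0, l - l₀, 0, 0) _ hl₀
    rw [extRep_single] at this
    simpa using this
  -- Step 3: W = ⊤
  rw [Submodule.eq_top_iff']
  intro f
  have : f = f.sum fun l c => c • Finsupp.single l (1:ℂ) := by
    conv_lhs => rw [← Finsupp.sum_single f]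
    exact Finsupp.sum_congr fun l _ => by rw [Finsupp.smul_single, smul_eq_mul, mul_one]
  rw [this]
  rw [Finsupp.sum]
  exact Submodule.sum_mem W fun l _ => W.smul_mem _ (hall l)
end
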